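/- Let V and W be reflexive Banach spaces and B : W × V → ℝ a bounded bilinear form whose inf-sup constant inf_{w≠0} sup_{v≠0} B(w,v)/(‖w‖‖v‖) is positive and whose associated operator is boundedly invertible. Then inf_{w≠0} sup_{v≠0} B(w,v)/(‖w‖‖v‖) = inf_{v≠0} sup_{w≠0} B(w,v)/(‖w‖‖v‖); i.e., the inf-sup constant is unchanged when the roles of trial and test spaces are interchanged. -/

import Mathlib

open NormedSpace

lemma sup_div_eq' {V : Type*} [NormedAddCommGroup V] [NormedSpace ℝ V] [Nontrivial V]
    (g : V →L[ℝ] ℝ) {c : ℝ} (hc : 0 < c) :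
    ⨆ v : {v : V // v ≠ 0}, g v.1 / (c * ‖v.1‖) = ‖g‖ / c := by
  obtain ⟨v₀, hv₀⟩ := exists_ne (0 : V)
  have hne : Nonempty {v : V // v ≠ 0} := ⟨⟨v₀, hv₀⟩⟩
  have hub : ∀ v : {v : V // v ≠ 0}, g v.1 / (c * ‖v.1‖) ≤ ‖g‖ / c := by
    intro v
    have hv : (0:ℝ) < ‖v.1‖ := norm_pos_iff.mpr v.2
    have h1 : g v.1 ≤ ‖g‖ * ‖v.1‖ := (le_abs_self _).trans (g.le_opNorm v.1)
    calc g v.1 / (c * ‖v.1‖) ≤ (‖g‖ * ‖v.1‖) / (c * ‖v.1‖) := by gcongr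
      _ = ‖g‖ / c := by rw [mul_div_mul_right _ _ (ne_of_gt hv)]
  have hbdd : BddAbove (Set.range fun v : {v : V // v ≠ 0} => g v.1 / (c * ‖v.1‖)) :=
    ⟨‖g‖ / c, Set.forall_mem_range.mpr hub⟩
  refine le_antisymm (ciSup_le hub) ?_
  set S := ⨆ v : {v : V // v ≠ 0}, g v.1 / (c * ‖v.1‖) with hS
  have hterm : ∀ v : V, v ≠ 0 → g v / (c * ‖v‖) ≤ S := fun v hv => le_ciSup hbdd ⟨v, hv⟩
  have hSnn : 0 ≤ S := by
    have h1 := hterm v₀ hv₀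
    have h2 := hterm (-v₀) (neg_ne_zero.mpr hv₀)
    simp only [map_neg, norm_neg, neg_div] at h2
    linarith
  have hnorm : ‖g‖ ≤ S * c := by
    refine g.opNorm_le_bound (by positivity) (fun v => ?_)
    by_cases hv : v = 0
    · simp [hv]
    have hv' : (0:ℝ) < ‖v‖ := norm_pos_iff.mpr hv
    rcases le_total 0 (g v) with h | h
    · have := hterm v hv
      rw [div_le_iff₀ (by positivity)] at this
      calc ‖g v‖ = g v := by rw [Real.norm_eq_abs, abs_of_nonneg h]
        _ ≤ S * (c * ‖v‖) := this
        _ = S * c * ‖v‖ := by ring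
    · have := hterm (-v) (neg_ne_zero.mpr hv)
      simp only [map_neg, norm_neg] at this
      rw [div_le_iff₀ (by positivity)] at this
      calc ‖g v‖ = -(g v) := by rw [Real.norm_eq_abs, abs_of_nonpos h]
        _ ≤ S * (c * ‖v‖) := this
        _ = S * c * ‖v‖ := by ring
  rw [div_le_iff₀ hc]
  exact hnorm

/-- If `V`, `W` are reflexive Banach spaces and `B` is a bounded bilinear form
satisfying (BNB1) and (BNB2) (so the associated operator is an isomorphism),
then the inf-sup constant is unchanged when the roles of the trial and test
spaces are interchanged. -/
theorem stmt1
    {W V : Type*} [NormedAddCommGroup W] [NormedSpace ℝ W] [CompleteSpace W]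
    [NormedAddCommGroup V] [NormedSpace ℝ V] [CompleteSpace V]
    (hreflW : Function.Surjective (inclusionInDoubleDual ℝ W))
    (hreflV : Function.Surjective (inclusionInDoubleDual ℝ V))
    (B : W →L[ℝ] V →L[ℝ] ℝ)
    (hBNB1 : 0 < ⨅ w : {w : W // w ≠ 0}, ⨆ v : {v : V // v ≠ 0},
        B w.1 v.1 / (‖w.1‖ * ‖v.1‖))
    (hBNB2 : ∀ v : V, v ≠ 0 → ∃ w : W, 0 < B w v)
    (hiso : ∃ e : W ≃L[ℝ] StrongDual ℝ V, (e : W → StrongDual ℝ V) = fun w => B w) :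
    (⨅ w : {w : W // w ≠ 0}, ⨆ v : {v : V // v ≠ 0},
        B w.1 v.1 / (‖w.1‖ * ‖v.1‖)) =
      ⨅ v : {v : V // v ≠ 0}, ⨆ w : {w : W // w ≠ 0},
        B w.1 v.1 / (‖w.1‖ * ‖v.1‖) := by
  obtain ⟨e, he⟩ := hiso
  have heB : ∀ w : W, B w = e w := fun w => (congrFun he w).symm
  -- nontriviality of W
  have hW : Nontrivial W := by
    by_contra h
    rw [not_nontrivial_iff_subsingleton] at h
    haveI : IsEmpty {w : W // w ≠ 0} := ⟨fun w => w.2 (Subsingleton.elim _ _)⟩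
    rw [Real.iInf_of_isEmpty] at hBNB1
    exact lt_irrefl 0 hBNB1
  obtain ⟨w₀, hw₀⟩ := exists_ne (0 : W)
  haveI hWne : Nonempty {w : W // w ≠ 0} := ⟨⟨w₀, hw₀⟩⟩
  have hV : Nontrivial V := by
    by_contra h
    rw [not_nontrivial_iff_subsingleton] at h
    haveI : IsEmpty {v : V // v ≠ 0} := ⟨fun v => v.2 (Subsingleton.elim _ _)⟩
    have hz : ∀ w : {w : W // w ≠ 0},
        (⨆ v : {v : V // v ≠ 0}, B w.1 v.1 / (‖w.1‖ * ‖v.1‖)) = 0 :=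
      fun w => Real.iSup_of_isEmpty _
    simp only [hz, ciInf_const] at hBNB1
    exact lt_irrefl 0 hBNB1
  haveI hVne : Nonempty {v : V // v ≠ 0} := by
    obtain ⟨v₀, hv₀⟩ := exists_ne (0 : V); exact ⟨⟨v₀, hv₀⟩⟩
  -- rewrite inner sups as operator norms
  have hL : ∀ w : {w : W // w ≠ 0},
      (⨆ v : {v : V // v ≠ 0}, B w.1 v.1 / (‖w.1‖ * ‖v.1‖)) = ‖B w.1‖ / ‖w.1‖ :=
    fun w => sup_div_eq' (B w.1) (norm_pos_iff.mpr w.2)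
  have hR : ∀ v : {v : V // v ≠ 0},
      (⨆ w : {w : W // w ≠ 0}, B w.1 v.1 / (‖w.1‖ * ‖v.1‖)) = ‖B.flip v.1‖ / ‖v.1‖ := by
    intro v
    rw [← sup_div_eq' (B.flip v.1) (norm_pos_iff.mpr v.2)]
    congr 1
    ext w
    rw [ContinuousLinearMap.flip_apply, mul_comm]
  simp only [hL] at hBNB1 ⊢
  simp only [hR]
  set α := ⨅ w : {w : W // w ≠ 0}, ‖B w.1‖ / ‖w.1‖ with hαdef
  set β := ⨅ v : {v : V // v ≠ 0}, ‖B.flip v.1‖ / ‖v.1‖ with hβdef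
  have hbddα : BddBelow (Set.range fun w : {w : W // w ≠ 0} => ‖B w.1‖ / ‖w.1‖) :=
    ⟨0, Set.forall_mem_range.mpr fun w => by positivity⟩
  have hbddβ : BddBelow (Set.range fun v : {v : V // v ≠ 0} => ‖B.flip v.1‖ / ‖v.1‖) :=
    ⟨0, Set.forall_mem_range.mpr fun v => by positivity⟩
  have hαw : ∀ w : W, α * ‖w‖ ≤ ‖B w‖ := by
    intro w
    by_cases hw : w = 0
    · simp [hw]
    · have h1 : α ≤ ‖B w‖ / ‖w‖ := ciInf_le hbddα ⟨w, hw⟩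
      rw [le_div_iff₀ (norm_pos_iff.mpr hw)] at h1
      exact h1
  -- α ≤ β
  have hαβ : α ≤ β := by
    refine le_ciInf (fun v => ?_)
    rw [le_div_iff₀ (norm_pos_iff.mpr v.2)]
    obtain ⟨g, hg1, hgv⟩ := exists_dual_vector ℝ v.1 (norm_ne_zero_iff.mpr v.2)
    set w := e.symm g with hwdef
    have hBw : B w = g := by rw [heB w, hwdef, e.apply_symm_apply]
    have h1 : ‖v.1‖ = B w v.1 := by rw [hBw]; exact_mod_cast hgv.symm
    have h2 : α * ‖w‖ ≤ 1 := by
      have := hαw w; rw [hBw, hg1] at this; exact this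
    have h3 : B w v.1 ≤ ‖B.flip v.1‖ * ‖w‖ := by
      have := (B.flip v.1).le_opNorm w
      rw [ContinuousLinearMap.flip_apply] at this
      exact (le_abs_self _).trans this
    calc α * ‖v.1‖ = α * B w v.1 := by rw [← h1]
      _ ≤ α * (‖B.flip v.1‖ * ‖w‖) := mul_le_mul_of_nonneg_left h3 hBNB1.le
      _ = ‖B.flip v.1‖ * (α * ‖w‖) := by ring
      _ ≤ ‖B.flip v.1‖ * 1 := mul_le_mul_of_nonneg_left h2 (norm_nonneg _)
      _ = ‖B.flip v.1‖ := mul_one _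
  have hβpos : 0 < β := lt_of_lt_of_le hBNB1 hαβ
  have hβv : ∀ v : V, β * ‖v‖ ≤ ‖B.flip v‖ := by
    intro v
    by_cases hv : v = 0
    · simp [hv]
    · have h1 : β ≤ ‖B.flip v‖ / ‖v‖ := ciInf_le hbddβ ⟨v, hv⟩
      rw [le_div_iff₀ (norm_pos_iff.mpr hv)] at h1
      exact h1
  -- β ≤ α
  have hβα : β ≤ α := by
    refine le_ciInf (fun w => ?_)
    rw [le_div_iff₀ (norm_pos_iff.mpr w.2)]
    obtain ⟨h, hh1, hhw⟩ := exists_dual_vector ℝ w.1 (norm_ne_zero_iff.mpr w.2)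
    -- find v with B.flip v = h
    obtain ⟨v, hv⟩ := hreflV (h.comp (e.symm : StrongDual ℝ V →L[ℝ] W))
    have hflip : B.flip v = h := by
      ext w'
      have h1 : (inclusionInDoubleDual ℝ V v) (e w') = h (e.symm (e w')) := by
        rw [hv, ContinuousLinearMap.comp_apply]; rfl
      rw [e.symm_apply_apply] at h1
      rw [dual_def] at h1
      rw [ContinuousLinearMap.flip_apply, heB w', h1]
    have h1 : ‖w.1‖ = B w.1 v := by
      have : B w.1 v = h w.1 := by
        rw [← hflip]; rfl
      rw [this]; exact_mod_cast hhw.symm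
    have h2 : β * ‖v‖ ≤ 1 := by
      have := hβv v; rw [hflip, hh1] at this; exact this
    have h3 : B w.1 v ≤ ‖B w.1‖ * ‖v‖ := (le_abs_self _).trans ((B w.1).le_opNorm v)
    calc β * ‖w.1‖ = β * B w.1 v := by rw [← h1]
      _ ≤ β * (‖B w.1‖ * ‖v‖) := mul_le_mul_of_nonneg_left h3 hβpos.le
      _ = ‖B w.1‖ * (β * ‖v‖) := by ring
      _ ≤ ‖B w.1‖ * 1 := mul_le_mul_of_nonneg_left h2 (norm_nonneg _)
      _ = ‖B w.1‖ := mul_one _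
  exact le_antisymm hαβ hβα
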